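/- For every rooted tree T with m ≥ 0 subtrees, each subtree root's restoration value is strictly less than the root's restoration value: R_T(v_i) < R_T(v) for each i, where v is the root and v_1,...,v_m are the roots of the subtrees. -/

import Mathlib

/-- A rooted tree: a root with a finite list of subtrees. -/
inductive RTree where
  | node : List RTree → RTree

/-- Restoration number and period of a rooted tree, by mutual recursion:
`RP (leaf) = (1, 2)`; for a root with subtrees `ts`,
`R = lcm of the periods of the subtrees` and
`P = (m+2)·R − Σᵢ (R / P(Tᵢ))·R(Tᵢ)`. -/
def RTree.RP : RTree → ℕ × ℕ
  | .node [] => (1, 2)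
  | .node ts@(_ :: _) =>
      let rps := ts.attach.map (fun t => RTree.RP t.1)
      let r := (rps.map Prod.snd).foldr Nat.lcm 1
      (r, (ts.length + 2) * r - (rps.map (fun q => r / q.2 * q.1)).sum)
  decreasing_by
    cases t with
    | mk t ht =>
      have := List.sizeOf_lt_of_mem ht
      simp_all; omega

/-- Restoration number of a rooted tree. -/
def RTree.R (t : RTree) : ℕ := t.RP.1

/-- Period of a rooted tree. -/
def RTree.P (t : RTree) : ℕ := t.RP.2

/-- Vertices are addressed by paths from the root (lists of child indices).
`restAt T w` is the restoration value `R_T(w)` of the vertex `w` in `T`: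
`R_T(root) = R(T)` and for `w` in the `k`-th subtree `T_k`,
`R_T(k :: w) = (R(T)/P(T_k)) · R_{T_k}(w)`. (Value `0` for invalid addresses.) -/
def RTree.restAt : RTree → List ℕ → ℕ
  | t, [] => t.R
  | .node ts, k :: rest =>
      match h : ts[k]? with
      | some tk => (RTree.node ts).R / tk.P * tk.restAt rest
      | none => 0
  decreasing_by
    simp only [List.getElem?_eq_some_iff] at h
    obtain ⟨hk, rfl⟩ := h
    simpa using Nat.lt_succ_of_le (List.sizeOf_le_of_mem (List.getElem_mem hk))

/-- `isVertex T w`: the address `w` denotes an actual vertex of `T`. -/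
def RTree.isVertex : RTree → List ℕ → Prop
  | _, [] => True
  | .node ts, k :: rest =>
      match h : ts[k]? with
      | some tk => tk.isVertex rest
      | none => False
  decreasing_by
    simp only [List.getElem?_eq_some_iff] at h
    obtain ⟨hk, rfl⟩ := h
    simpa using Nat.lt_succ_of_le (List.sizeOf_le_of_mem (List.getElem_mem hk))

theorem dvd_foldr_lcm (l : List ℕ) (a : ℕ) (ha : a ∈ l) : a ∣ l.foldr Nat.lcm 1 := by
  induction l with
  | nil => simp at ha
  | cons b l ih =>
    rcases List.mem_cons.mp ha with rfl | ha
    · exact Nat.dvd_lcm_left _ _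
    · exact (ih ha).trans (Nat.dvd_lcm_right _ _)

theorem foldr_lcm_pos (l : List ℕ) (h : ∀ x ∈ l, 0 < x) : 0 < l.foldr Nat.lcm 1 := by
  induction l with
  | nil => simp
  | cons b l ih =>
    simp only [List.foldr_cons]
    exact Nat.lcm_pos (h b (by simp)) (ih fun x hx => h x (by simp [hx]))

theorem RP_lt : ∀ t : RTree, 0 < t.RP.1 ∧ t.RP.1 < t.RP.2
  | .node [] => by simp [RTree.RP]
  | .node (t0 :: ts) => by
    have IH : ∀ t ∈ t0 :: ts, 0 < t.RP.1 ∧ t.RP.1 < t.RP.2 := fun t ht =>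
      have := List.sizeOf_lt_of_mem ht
      RP_lt t
    simp only [RTree.RP]
    set L := t0 :: ts with hL
    set rps := L.attach.map (fun t => RTree.RP t.1) with hrps
    set r := (rps.map Prod.snd).foldr Nat.lcm 1 with hr
    have hmem : ∀ q ∈ rps, 0 < q.1 ∧ q.1 < q.2 := by
      intro q hq
      simp only [hrps, List.mem_map, List.mem_attach] at hq
      obtain ⟨⟨t, ht⟩, -, rfl⟩ := hq
      exact IH t ht
    have hrpos : 0 < r := by
      apply foldr_lcm_pos
      intro x hx
      simp only [List.mem_map] at hx
      obtain ⟨q, hq, rfl⟩ := hx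
      exact lt_trans (hmem q hq).1 (hmem q hq).2
    have hterm : ∀ q ∈ rps, r / q.2 * q.1 ≤ r - 1 := by
      intro q hq
      obtain ⟨h1, h2⟩ := hmem q hq
      have hdvd : q.2 ∣ r := dvd_foldr_lcm _ _ (List.mem_map_of_mem (f := Prod.snd) hq)
      have hq2 : 0 < q.2 := lt_trans h1 h2
      have hdivpos : 0 < r / q.2 := Nat.div_pos (Nat.le_of_dvd hrpos hdvd) hq2
      have : r / q.2 * q.1 + r / q.2 ≤ r / q.2 * q.2 := by
        calc r / q.2 * q.1 + r / q.2 = r / q.2 * (q.1 + 1) := by ring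
        _ ≤ r / q.2 * q.2 := Nat.mul_le_mul_left _ h2
      rw [Nat.div_mul_cancel hdvd] at this
      omega
    have hsum : (rps.map (fun q => r / q.2 * q.1)).sum ≤ rps.length * (r - 1) := by
      calc (rps.map (fun q => r / q.2 * q.1)).sum
          ≤ (rps.map (fun _ => r - 1)).sum :=
            List.sum_le_sum (by intro q hq; exact hterm q hq)
        _ = rps.length * (r - 1) := by rw [List.map_const', List.sum_replicate, smul_eq_mul]
    have hlen : rps.length = L.length := by simp [hrps]
    have hLlen : 0 < L.length := by simp [hL]
    refine ⟨hrpos, ?_⟩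
    · have := hsum
      rw [hlen] at this
      have h3 := Nat.mul_le_mul_left L.length (Nat.sub_le r 1)
      have h4 : (L.length + 2) * r = L.length * r + 2 * r := by ring
      have h2 : L.length * (r-1) + 2*r ≤ (L.length + 2) * r := by linarith
      omega
termination_by t => sizeOf t

theorem P_dvd_R (ts : List RTree) (t : RTree) (ht : t ∈ ts) (h : ts ≠ []) :
    t.P ∣ (RTree.node ts).R := by
  match ts with
  | [] => simp at ht
  | t0 :: ts' =>
    simp only [RTree.R, RTree.RP]
    apply dvd_foldr_lcm
    simp only [List.map_map, List.mem_map, List.mem_attach, true_and]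
    exact ⟨⟨t, ht⟩, rfl⟩

/-- Each subtree root's restoration value is strictly less than the root's:
`R_T(vᵢ) < R_T(v)` for every subtree index `i`. -/
theorem subtree_root_restoration_lt (ts : List RTree) (i : ℕ) (hi : i < ts.length) :
    (RTree.node ts).restAt [i] < (RTree.node ts).restAt [] := by
  have hget : ts[i]? = some ts[i] := List.getElem?_eq_getElem hi
  have h1 : (RTree.node ts).restAt [i]
      = (RTree.node ts).R / (ts[i]).P * (ts[i]).restAt [] := by
    conv_lhs => rw [RTree.restAt.eq_def]
    split
    · rename_i hk
      simp at hk
    · rename_i ts' k rest heq hk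
      cases hk
      injection heq with h'
      subst h'
      split
      · rename_i tk hk2
        rw [hget] at hk2
        cases hk2
        rfl
      · rename_i hk2
        rw [hget] at hk2
        cases hk2
  have h0 : (RTree.node ts).restAt [] = (RTree.node ts).R := by rw [RTree.restAt]
  have hmem : ts[i] ∈ ts := List.getElem_mem hi
  have hne : ts ≠ [] := by rintro rfl; simp at hi
  have hdvd : (ts[i]).P ∣ (RTree.node ts).R := P_dvd_R ts _ hmem hne
  have hlt := RP_lt (ts[i])
  have hRpos : 0 < (RTree.node ts).R := (RP_lt _).1
  have hPpos : 0 < (ts[i]).P := lt_trans hlt.1 hlt.2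
  have hdivpos : 0 < (RTree.node ts).R / (ts[i]).P :=
    Nat.div_pos (Nat.le_of_dvd hRpos hdvd) hPpos
  rw [h1, h0, RTree.restAt]
  calc (RTree.node ts).R / (ts[i]).P * (ts[i]).R
      < (RTree.node ts).R / (ts[i]).P * (ts[i]).P :=
        mul_lt_mul_of_pos_left hlt.2 hdivpos
    _ = (RTree.node ts).R := Nat.div_mul_cancel hdvd
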